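/- Let P_D = (1/2)·N(−3,1) + (1/2)·N(3,1) and, for θ = (θ₁, θ₂) ∈ ℝ², let P_θ = (1/2)·N(θ₁,1) + (1/2)·N(θ₂,1). Let φ_μ(x) = (2π)^{−1/2} exp(−(x−μ)²/2) denote the density of N(μ,1). Then: (i) for each θ, the map φ ↦ ∫ log φ_φ(x) dP_θ(x) attains a unique global maximum at φ*(θ) = (θ₁+θ₂)/2; (ii) the resulting upper-level objective θ ↦ ∫ log φ_{φ*(θ)}(x) dP_D(x) attains its global maximum exactly at those θ with θ₁ + θ₂ = 0. -/

import Mathlib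

open MeasureTheory ProbabilityTheory
open scoped ENNReal

/-- The mixture `(1/2)·N(θ₁,1) + (1/2)·N(θ₂,1)` of two unit-variance Gaussians. -/
noncomputable def gaussMix (θ₁ θ₂ : ℝ) : Measure ℝ :=
  (2 : ℝ≥0∞)⁻¹ • gaussianReal θ₁ 1 + (2 : ℝ≥0∞)⁻¹ • gaussianReal θ₂ 1

/-- The expected log-likelihood `∫ log φ_c dP` of the unit-variance Gaussian density
`φ_c(x) = (2π)^(−1/2) exp(−(x−c)²/2)` under the distribution `P`. -/
noncomputable def gaussLogLik (c : ℝ) (P : Measure ℝ) : ℝ :=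
  ∫ x, Real.log ((Real.sqrt (2 * Real.pi))⁻¹ * Real.exp (-(x - c) ^ 2 / 2)) ∂P

section LBTAux
open Real
open scoped NNReal

lemma int_std_sq : Integrable (fun x : ℝ => x ^ 2) (gaussianReal 0 1) := by
  rw [gaussianReal_of_var_ne_zero _ one_ne_zero,
    integrable_withDensity_iff (measurable_gaussianPDF _ _)
      (Filter.Eventually.of_forall fun _ => ENNReal.ofReal_lt_top)]
  have h := integrable_rpow_mul_exp_neg_mul_sq (b := 2⁻¹) (by norm_num) (s := 2) (by norm_num)
  have h2 : Integrable (fun x : ℝ => x ^ 2 * Real.exp (-2⁻¹ * x ^ 2)) volume := by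
    have : (fun x : ℝ => x ^ (2:ℝ) * Real.exp (-2⁻¹ * x ^ 2))
        = fun x : ℝ => x ^ 2 * Real.exp (-2⁻¹ * x ^ 2) := by
      funext x
      rw [show (2:ℝ) = ((2:ℕ):ℝ) by norm_num, Real.rpow_natCast]
    rwa [this] at h
  apply (h2.const_mul (√(2 * π * 1))⁻¹).congr
  filter_upwards with x
  simp only [gaussianPDF, gaussianPDFReal]
  rw [ENNReal.toReal_ofReal (by positivity)]
  push_cast
  ring_nf

lemma int_std_id : Integrable (fun x : ℝ => x) (gaussianReal 0 1) := by
  rw [gaussianReal_of_var_ne_zero _ one_ne_zero,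
    integrable_withDensity_iff (measurable_gaussianPDF _ _)
      (Filter.Eventually.of_forall fun _ => ENNReal.ofReal_lt_top)]
  have h2 := integrable_mul_exp_neg_mul_sq (b := 2⁻¹) (by norm_num)
  apply (h2.const_mul (√(2 * π * 1))⁻¹).congr
  filter_upwards with x
  simp only [gaussianPDF, gaussianPDFReal]
  rw [ENNReal.toReal_ofReal (by positivity)]
  push_cast
  ring_nf

lemma gauss_eq_map (μ : ℝ) : gaussianReal μ 1 = (gaussianReal 0 1).map (· + μ) := by
  rw [gaussianReal_map_add_const, zero_add]

lemma int_gauss_id (μ : ℝ) : Integrable (fun x : ℝ => x) (gaussianReal μ 1) := by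
  rw [gauss_eq_map μ,
    integrable_map_measure measurable_id'.aestronglyMeasurable
      (measurable_id'.add_const μ).aemeasurable]
  have : ((fun x : ℝ => x) ∘ fun x => x + μ) = fun x : ℝ => x + μ := rfl
  rw [this]
  exact int_std_id.add (integrable_const _)

lemma int_gauss_sq (μ : ℝ) : Integrable (fun x : ℝ => x ^ 2) (gaussianReal μ 1) := by
  rw [gauss_eq_map μ,
    integrable_map_measure (measurable_id'.pow_const 2).aestronglyMeasurable
      (measurable_id'.add_const μ).aemeasurable]
  have : ((fun x : ℝ => x ^ 2) ∘ fun x => x + μ)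
      = fun x : ℝ => x ^ 2 + (2 * μ * x + μ ^ 2) := by
    funext x; simp only [Function.comp]; ring
  rw [this]
  exact int_std_sq.add ((int_std_id.const_mul (2 * μ)).add (integrable_const _))

lemma mean_std : ∫ x, x ∂gaussianReal 0 1 = 0 := by
  have hneg : (gaussianReal 0 1).map (fun x : ℝ => -x) = gaussianReal 0 1 := by
    have h := gaussianReal_map_const_mul (μ := 0) (v := 1) (-1)
    have h1 : (fun x : ℝ => (-1) * x) = fun x : ℝ => -x := by funext x; ring
    have h2 : (⟨(-1 : ℝ) ^ 2, sq_nonneg _⟩ : ℝ≥0) * 1 = 1 := by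
      ext; norm_num
    rw [h1] at h
    rw [h, neg_one_mul, neg_zero]
    congr 1
  have h1 : ∫ x, x ∂((gaussianReal 0 1).map (fun x : ℝ => -x))
      = ∫ x, -x ∂gaussianReal 0 1 :=
    integral_map (f := fun x : ℝ => x) measurable_neg.aemeasurable
      measurable_id.aestronglyMeasurable
  rw [hneg, integral_neg] at h1
  linarith

lemma mean_gauss (μ : ℝ) : ∫ x, x ∂gaussianReal μ 1 = μ := by
  rw [gauss_eq_map μ, integral_map (f := fun x : ℝ => x)
    (measurable_id'.add_const μ).aemeasurable measurable_id.aestronglyMeasurable]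
  rw [integral_add int_std_id (integrable_const _), mean_std, integral_const]
  simp

lemma logpdf_fun_eq (c : ℝ) :
    (fun x => Real.log ((Real.sqrt (2 * Real.pi))⁻¹ * Real.exp (-(x - c) ^ 2 / 2)))
      = fun x : ℝ => (Real.log (Real.sqrt (2 * Real.pi))⁻¹ - c ^ 2 / 2)
          + (c * x - x ^ 2 / 2) := by
  funext x
  rw [Real.log_mul (by positivity) (Real.exp_ne_zero _), Real.log_exp]
  ring

lemma int_loglik (c μ : ℝ) :
    Integrable (fun x => Real.log ((Real.sqrt (2 * Real.pi))⁻¹ * Real.exp (-(x - c) ^ 2 / 2)))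
      (gaussianReal μ 1) := by
  rw [logpdf_fun_eq]
  exact (integrable_const _).add (((int_gauss_id μ).const_mul c).sub ((int_gauss_sq μ).div_const 2))

lemma loglik_gauss (c μ : ℝ) :
    gaussLogLik c (gaussianReal μ 1)
      = Real.log (Real.sqrt (2 * Real.pi))⁻¹ - (∫ x, x ^ 2 ∂gaussianReal μ 1) / 2
          + c * μ - c ^ 2 / 2 := by
  unfold gaussLogLik
  have hid : Integrable (fun x : ℝ => c * x) (gaussianReal μ 1) :=
    (int_gauss_id μ).const_mul c
  have hsq2 : Integrable (fun x : ℝ => x ^ 2 / 2) (gaussianReal μ 1) :=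
    (int_gauss_sq μ).div_const 2
  have hsub : Integrable (fun x : ℝ => c * x - x ^ 2 / 2) (gaussianReal μ 1) := hid.sub hsq2
  rw [logpdf_fun_eq,
    integral_add (integrable_const _) hsub,
    integral_sub hid hsq2,
    integral_const, integral_const_mul, integral_div, mean_gauss]
  simp [measure_univ]
  ring

lemma loglik_mix (c θ₁ θ₂ : ℝ) :
    gaussLogLik c (gaussMix θ₁ θ₂)
      = Real.log (Real.sqrt (2 * Real.pi))⁻¹
          - ((∫ x, x ^ 2 ∂gaussianReal θ₁ 1) + (∫ x, x ^ 2 ∂gaussianReal θ₂ 1)) / 4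
          + c * (θ₁ + θ₂) / 2 - c ^ 2 / 2 := by
  have : gaussLogLik c (gaussMix θ₁ θ₂)
      = (gaussLogLik c (gaussianReal θ₁ 1) + gaussLogLik c (gaussianReal θ₂ 1)) / 2 := by
    unfold gaussLogLik gaussMix
    rw [integral_add_measure ((int_loglik c θ₁).smul_measure (by norm_num))
        ((int_loglik c θ₂).smul_measure (by norm_num)),
      integral_smul_measure, integral_smul_measure]
    simp only [smul_eq_mul]
    norm_num
    ring
  rw [this, loglik_gauss, loglik_gauss]
  ring

end LBTAux

/-- The limited-capacity estimator example of LBT (Section 3.2): with data distribution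
`P_D = (1/2)N(−3,1) + (1/2)N(3,1)`, generators `P_θ = (1/2)N(θ₁,1) + (1/2)N(θ₂,1)` and a
single-Gaussian estimator family `{N(c,1) : c ∈ ℝ}`: (i) for each `θ` the lower-level
objective `c ↦ ∫ log φ_c dP_θ` attains a unique global maximum at `c = (θ₁+θ₂)/2`;
(ii) the resulting upper-level objective `θ ↦ ∫ log φ_{(θ₁+θ₂)/2} dP_D` attains its global
maximum exactly at those `θ` with `θ₁ + θ₂ = 0`. -/
theorem lbt_limited_capacity_gaussian_estimator :
    -- (i) unique maximizer of the lower-level problem is the mean (θ₁+θ₂)/2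
    (∀ θ₁ θ₂ c : ℝ, c ≠ (θ₁ + θ₂) / 2 →
      gaussLogLik c (gaussMix θ₁ θ₂) < gaussLogLik ((θ₁ + θ₂) / 2) (gaussMix θ₁ θ₂)) ∧
    -- (ii) the upper-level objective is globally maximal exactly when θ₁ + θ₂ = 0
    (∀ θ₁ θ₂ : ℝ,
      (∀ θ₁' θ₂' : ℝ,
          gaussLogLik ((θ₁' + θ₂') / 2) (gaussMix (-3) 3)
            ≤ gaussLogLik ((θ₁ + θ₂) / 2) (gaussMix (-3) 3))
        ↔ θ₁ + θ₂ = 0) := by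
  constructor
  · intro θ₁ θ₂ c hc
    rw [loglik_mix, loglik_mix]
    have h : 0 < (c - (θ₁ + θ₂) / 2) ^ 2 :=
      lt_of_le_of_ne (sq_nonneg _) (Ne.symm (pow_ne_zero 2 (sub_ne_zero.mpr hc)))
    nlinarith [h]
  · intro θ₁ θ₂
    constructor
    · intro h
      have h0 := h 0 0
      rw [loglik_mix, loglik_mix] at h0
      nlinarith [sq_nonneg ((θ₁ + θ₂) / 2), h0]
    · intro h θ₁' θ₂'
      rw [loglik_mix, loglik_mix, h]
      nlinarith [sq_nonneg ((θ₁' + θ₂') / 2)]
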